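/- For all n ≥ 1, the Fibonacci-Narayana numbers (extended to negative indices) satisfy ∑_{i=0}^{n} C(n,i) · u(2n − 2i − 1) = u(3n − 1), where C(n,i) is the binomial coefficient. -/

import Mathlib

theorem narayana_aux (u : ℤ → ℤ)
    (hrec : ∀ k : ℤ, u (k + 3) = u (k + 2) + u k) :
    ∀ n : ℕ, ∀ m : ℤ, ∑ i ∈ Finset.range (n + 1),
        (Nat.choose n i : ℤ) * u (2 * (n : ℤ) - 2 * i + m) = u (3 * (n : ℤ) + m) := by
  intro n
  induction n with
  | zero => intro m; simp
  | succ n ih =>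
    intro m
    have step : (∑ i ∈ Finset.range (n + 2),
        ((n+1).choose i : ℤ) * u (2 * ((n:ℤ)+1) - 2 * i + m))
        = (∑ i ∈ Finset.range (n + 1), ((n.choose (i+1) : ℤ) + (n.choose i : ℤ))
            * u (2 * (n:ℤ) - 2 * i + m)) + u (2 * (n:ℤ) + 2 + m) := by
      rw [Finset.sum_range_succ']
      congr 1
      · apply Finset.sum_congr rfl
        intro i _
        have : ((n+1).choose (i+1) : ℤ) = (n.choose (i+1) : ℤ) + (n.choose i : ℤ) := by
          rw [Nat.choose_succ_succ]; push_cast; ring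
        rw [this]
        congr 2
        push_cast; ring
      · simp
        congr 1
    have hsplit : (∑ i ∈ Finset.range (n + 1), ((n.choose (i+1) : ℤ) + (n.choose i : ℤ))
            * u (2 * (n:ℤ) - 2 * i + m))
        = (∑ i ∈ Finset.range (n + 1), (n.choose (i+1) : ℤ) * u (2 * (n:ℤ) - 2 * i + m))
          + (∑ i ∈ Finset.range (n + 1), (n.choose i : ℤ) * u (2 * (n:ℤ) - 2 * i + m)) := by
      rw [← Finset.sum_add_distrib]
      apply Finset.sum_congr rfl
      intro i _; ring
    have e1 : (∑ i ∈ Finset.range (n + 1), (n.choose (i+1) : ℤ) * u (2 * (n:ℤ) - 2 * i + m))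
        = ∑ i ∈ Finset.range n, (n.choose (i+1) : ℤ) * u (2 * (n:ℤ) - 2 * i + m) := by
      rw [Finset.sum_range_succ]
      simp
    have e2 : (∑ i ∈ Finset.range (n + 1), (n.choose i : ℤ) * u (2 * (n:ℤ) - 2 * i + (m + 2)))
        = (∑ i ∈ Finset.range n, (n.choose (i+1) : ℤ) * u (2 * (n:ℤ) - 2 * i + m))
          + u (2 * (n:ℤ) + 2 + m) := by
      rw [Finset.sum_range_succ']
      congr 1
      · apply Finset.sum_congr rfl
        intro i _
        congr 2
        push_cast; ring
      · simp
        congr 1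
        ring
    have ih2 : (∑ i ∈ Finset.range (n + 1), (n.choose (i+1) : ℤ) * u (2 * (n:ℤ) - 2 * i + m))
          + u (2 * (n:ℤ) + 2 + m) = u (3 * (n:ℤ) + (m + 2)) := by
      rw [e1, ← e2, ih (m + 2)]
    have hcast : ∑ i ∈ Finset.range (n + 2),
        ((n+1).choose i : ℤ) * u (2 * ((n:ℕ)+1 : ℕ) - 2 * i + m) = ∑ i ∈ Finset.range (n + 2),
        ((n+1).choose i : ℤ) * u (2 * ((n:ℤ)+1) - 2 * i + m) := by
      apply Finset.sum_congr rfl; intro i _; congr 2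
    have hfin : u (3 * (n:ℤ) + m + 3) = u (3 * (n:ℤ) + m + 2) + u (3 * (n:ℤ) + m) :=
      hrec (3 * (n:ℤ) + m)
    push_cast [hcast, step, hsplit]
    have h3 : (3 : ℤ) * ((n:ℤ)+1) + m = 3 * (n:ℤ) + m + 3 := by ring
    rw [h3, hfin]
    rw [add_assoc, add_comm (∑ i ∈ Finset.range (n + 1), (n.choose i : ℤ) * u (2 * (n:ℤ) - 2 * i + m))]
    rw [← add_assoc, ih2, ih m]
    congr 1
    ring

theorem narayana_binomial_sum (u : ℤ → ℤ)
    (h0 : u 0 = 0) (h1 : u 1 = 1) (h2 : u 2 = 1)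
    (hrec : ∀ k : ℤ, u (k + 3) = u (k + 2) + u k)
    (n : ℕ) (hn : 1 ≤ n) :
    ∑ i ∈ Finset.range (n + 1),
        (Nat.choose n i : ℤ) * u (2 * (n : ℤ) - 2 * i - 1) = u (3 * (n : ℤ) - 1) := by
  have h := narayana_aux u hrec n (-1)
  have e : ∀ i : ℕ, 2 * (n:ℤ) - 2 * i + (-1) = 2 * (n:ℤ) - 2 * i - 1 := by intro i; ring
  simp only [e] at h
  have : (3 : ℤ) * n + (-1) = 3 * (n:ℤ) - 1 := by ring
  rwa [this] at h
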